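/- Let Γ be a finite simple connected graph with at least two vertices. Define a graph Γ' whose vertices are the essential vertices of Γ, with two essential vertices u, w joined by an edge in Γ' when N(u) ∩ N(w) ≠ ∅ (intersection of closed stars in Γ). Then Γ' is connected. -/
import Mathlib

open SimpleGraph

/-- Every closed star is contained in the closed star of an essential vertex. -/
lemma exists_essential_dominating {V : Type*} [Fintype V] (G : SimpleGraph V) (v : V) :
    ∃ e : V, (¬ ∃ x : V, x ≠ e ∧ insert e (G.neighborSet e) ⊂ insert x (G.neighborSet x)) ∧
      insert v (G.neighborSet v) ⊆ insert e (G.neighborSet e) := by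
  classical
  obtain ⟨e, he, hmax⟩ := Finset.exists_max_image
    (Finset.univ.filter fun x => insert v (G.neighborSet v) ⊆ insert x (G.neighborSet x))
    (fun x => (insert x (G.neighborSet x)).toFinset.card)
    ⟨v, by simp⟩
  simp only [Finset.mem_filter, Finset.mem_univ, true_and] at he hmax
  refine ⟨e, ?_, he⟩
  rintro ⟨x, hx, hss⟩
  have h1 : insert v (G.neighborSet v) ⊆ insert x (G.neighborSet x) := he.trans hss.subset
  have h2 := hmax x h1
  have h3 : (insert e (G.neighborSet e)).toFinset ⊂ (insert x (G.neighborSet x)).toFinset := by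
    rwa [Set.toFinset_ssubset_toFinset]
  exact absurd (Finset.card_lt_card h3) (not_lt.mpr h2)

theorem essential_vertex_graph_connected
    {V : Type*} [Fintype V] (G : SimpleGraph V) (hconn : G.Connected)
    (h2 : 1 < Fintype.card V) :
    (SimpleGraph.fromRel
      (fun (u w : {v : V // ¬ ∃ x : V, x ≠ v ∧
          insert v (G.neighborSet v) ⊂ insert x (G.neighborSet x)}) =>
        (insert u.1 (G.neighborSet u.1) ∩ insert w.1 (G.neighborSet w.1)).Nonempty)).Connected := by
  classical
  set Ess := {v : V // ¬ ∃ x : V, x ≠ v ∧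
      insert v (G.neighborSet v) ⊂ insert x (G.neighborSet x)} with hEss
  set Γ' := SimpleGraph.fromRel
      (fun (u w : Ess) =>
        (insert u.1 (G.neighborSet u.1) ∩ insert w.1 (G.neighborSet w.1)).Nonempty) with hΓ'
  -- reachability from intersecting closed stars
  have step : ∀ (u w : Ess),
      (insert u.1 (G.neighborSet u.1) ∩ insert w.1 (G.neighborSet w.1)).Nonempty →
      Γ'.Reachable u w := by
    intro u w hne
    by_cases h : u = w
    · exact h ▸ Reachable.refl u
    · exact (SimpleGraph.Adj.reachable (by
        rw [hΓ', SimpleGraph.fromRel_adj]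
        exact ⟨h, Or.inl hne⟩))
  have nonemptyEss : Nonempty Ess := by
    have : Nonempty V := Fintype.card_pos_iff.mp (by omega)
    obtain ⟨v⟩ := this
    obtain ⟨e, he, _⟩ := exists_essential_dominating G v
    exact ⟨⟨e, he⟩⟩
  rw [SimpleGraph.connected_iff]
  refine ⟨fun a b => ?_, nonemptyEss⟩
  have key : ∀ (x y : V) (p : G.Walk x y) (e f : Ess), x ∈ insert e.1 (G.neighborSet e.1) →
      y ∈ insert f.1 (G.neighborSet f.1) → Γ'.Reachable e f := by
    intro x y p
    induction p with
    | nil =>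
      intro e f he hf
      exact step e f ⟨_, he, hf⟩
    | @cons x y z hxy p ih =>
      intro e f he hf
      obtain ⟨e', he', hsub⟩ := exists_essential_dominating G y
      have hy : y ∈ insert e' (G.neighborSet e') := hsub (Set.mem_insert _ _)
      have hreach := ih ⟨e', he'⟩ f hy hf
      refine (step e ⟨e', he'⟩ ⟨x, he, ?_⟩).trans hreach
      exact hsub (Set.mem_insert_of_mem _ hxy.symm)
  obtain ⟨p⟩ := hconn.preconnected a.1 b.1
  exact key a.1 b.1 p a b (Set.mem_insert _ _) (Set.mem_insert _ _)
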